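/- Let R be an integral domain and let t ∈ R be nonzero. For each n ≥ 1, let M_n be an R-module annihilated by t^n that is free as a module over R⧸(t^n), and let f_n : M_{n+1} → M_n be R-linear transition maps. Then the inverse limit is t-torsion-free: if x = (x_n)_{n≥1} ∈ ∏_n M_n satisfies f_n(x_{n+1}) = x_n for all n ≥ 1 and t • x_n = 0 for all n ≥ 1, then x_n = 0 for all n ≥ 1. -/

import Mathlib

/-- In a free module over `R ⧸ (t^(n+1))`, any element killed by `t` is divisible by `t^n`. -/
theorem killed_by_t_div (R : Type*) [CommRing R] [IsDomain R] (t : R) (ht : t ≠ 0) (n : ℕ)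
    (M : Type*) [AddCommGroup M] [Module R M]
    (htor : Module.IsTorsionBy R M (t ^ (n + 1)))
    (hfree : letI : Module (R ⧸ Ideal.span {t ^ (n + 1)}) M := htor.module
      Module.Free (R ⧸ Ideal.span {t ^ (n + 1)}) M)
    (y : M) (hy : t • y = 0) : ∃ z : M, y = t ^ n • z := by
  letI : Module (R ⧸ Ideal.span {t ^ (n + 1)}) M := htor.module
  set A := R ⧸ Ideal.span {t ^ (n + 1)}
  obtain ⟨ι, b⟩ := (hfree.exists_basis : Nonempty _)
  -- `t • y = mk t • y = 0`, so each coordinate is killed by `mk t`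
  have hcoord : ∀ i, Ideal.Quotient.mk (Ideal.span {t ^ (n + 1)}) t * b.repr y i = 0 := by
    intro i
    have : Ideal.Quotient.mk (Ideal.span {t ^ (n + 1)}) t • y = 0 := by
      rw [htor.mk_smul]; exact hy
    have := congrArg (fun m => b.repr m i) this
    simpa only [map_smul, Finsupp.smul_apply, smul_eq_mul, map_zero, Finsupp.coe_zero,
      Pi.zero_apply] using this
  -- each coordinate is divisible by `mk (t^n)`
  have hdiv : ∀ i, ∃ d : A, b.repr y i = Ideal.Quotient.mk _ (t ^ n) * d := by
    intro i
    obtain ⟨r, hr⟩ := Ideal.Quotient.mk_surjective (b.repr y i)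
    have : t * r ∈ Ideal.span {t ^ (n + 1)} := by
      rw [← Ideal.Quotient.eq_zero_iff_mem, map_mul, hr]
      exact hcoord i
    rw [Ideal.mem_span_singleton] at this
    obtain ⟨s, hs⟩ := this
    have : r = t ^ n * s := by
      apply mul_left_cancel₀ ht
      rw [hs, pow_succ', mul_assoc]
    exact ⟨Ideal.Quotient.mk _ s, by rw [← hr, this, map_mul]⟩
  choose d hd using hdiv
  refine ⟨(b.repr y).support.sum (fun i => d i • b i), ?_⟩
  have := b.linearCombination_repr y
  rw [Finset.smul_sum]
  calc y = (b.repr y).support.sum (fun i => b.repr y i • b i) := by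
        conv_lhs => rw [← this]
        rw [Finsupp.linearCombination_apply, Finsupp.sum]
    _ = _ := by
        refine Finset.sum_congr rfl fun i _ => ?_
        rw [hd i, mul_smul, ← htor.mk_smul (t ^ n)]


/-- **The inverse limit of free `R⧸(tⁿ)`-modules is `t`-torsion-free.**  Let `R` be an
integral domain and `t ∈ R` nonzero.  For each `n ≥ 1`, let `M n` be an `R`-module
annihilated by `t ^ n` which is free as a module over `R ⧸ (t ^ n)`, with `R`-linear
transition maps `f n : M (n+1) → M n`.  If `x = (x n)` is a compatible sequence with
`t • x n = 0` for all `n ≥ 1`, then `x n = 0` for all `n ≥ 1`. -/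
theorem inverseLimit_torsionFree
    (R : Type*) [CommRing R] [IsDomain R] (t : R) (ht : t ≠ 0)
    (M : ℕ → Type*) [∀ n, AddCommGroup (M n)] [∀ n, Module R (M n)]
    (htor : ∀ n, 1 ≤ n → Module.IsTorsionBy R (M n) (t ^ n))
    (hfree : ∀ n (hn : 1 ≤ n),
      letI : Module (R ⧸ Ideal.span {t ^ n}) (M n) := (htor n hn).module
      Module.Free (R ⧸ Ideal.span {t ^ n}) (M n))
    (f : ∀ n, M (n + 1) →ₗ[R] M n)
    (x : ∀ n, M n)
    (hcomp : ∀ n, 1 ≤ n → f n (x (n + 1)) = x n)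
    (hx : ∀ n, 1 ≤ n → t • x n = 0) :
    ∀ n, 1 ≤ n → x n = 0 := by
  intro n hn
  rw [← hcomp n hn]
  obtain ⟨z, hz⟩ := killed_by_t_div R t ht n (M (n + 1)) (htor (n + 1) (by omega))
    (hfree (n + 1) (by omega)) (x (n + 1)) (hx (n + 1) (by omega))
  rw [hz, map_smul]
  apply htor n hn
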